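/- Under the kink assumptions, the transformed potential V(φ) = (W'(φ))²/W(φ) − W''(φ) extends continuously to the closed interval [ζ₋, ζ₊] with V(ζ₋) = W''(ζ₋) and V(ζ₊) = W''(ζ₊). -/

import Mathlib

open Real Filter Set Topology

private lemma W_smooth_facts {W : ℝ → ℝ} (hW3 : ContDiff ℝ 3 W) :
    Differentiable ℝ W ∧ Differentiable ℝ (deriv W) ∧
      Continuous (deriv (deriv W)) := by
  have h1 : ContDiff ℝ (2+1 : WithTop ℕ∞) W := by
    convert hW3 using 2
    norm_num
  rw [contDiff_succ_iff_deriv] at h1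
  have h2 : ContDiff ℝ (1+1 : WithTop ℕ∞) (deriv W) := by
    convert h1.2.2 using 2
    · rfl
    · rfl
    · norm_num
  rw [contDiff_succ_iff_deriv] at h2
  exact ⟨h1.1, h2.1, h2.2.2.continuous⟩

private lemma iter2 (W : ℝ → ℝ) : iteratedDeriv 2 W = deriv (deriv W) := by
  rw [show (2:ℕ) = 1+1 from rfl, iteratedDeriv_succ, iteratedDeriv_one]

/-- Right limit at a zero: `(W')²/W → 2 W''`. -/
private lemma lim_right {W : ℝ → ℝ} {ζ : ℝ} (hW3 : ContDiff ℝ 3 W)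
    (hW0 : W ζ = 0) (hW' : deriv W ζ = 0)
    (hW'' : 0 < deriv (deriv W) ζ) :
    Tendsto (fun φ => (deriv W φ) ^ 2 / W φ) (𝓝[>] ζ)
      (𝓝 (2 * deriv (deriv W) ζ)) := by
  obtain ⟨hWd, hW1d, hW2c⟩ := W_smooth_facts hW3
  -- W'' > 0 near ζ
  have hpos : ∀ᶠ x in 𝓝 ζ, 0 < deriv (deriv W) x :=
    hW2c.continuousAt.eventually (eventually_gt_nhds hW'')
  obtain ⟨δ, hδ, hball⟩ := Metric.eventually_nhds_iff_ball.1 hpos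
  -- deriv W > 0 on (ζ, ζ+δ)
  have hmono : StrictMonoOn (deriv W) (Icc ζ (ζ + δ/2)) := by
    apply strictMonoOn_of_deriv_pos (convex_Icc _ _) (hW1d.continuous.continuousOn)
    intro x hx
    rw [interior_Icc] at hx
    apply hball
    rw [Real.ball_eq_Ioo]
    constructor <;> [linarith [hx.1]; linarith [hx.2, hδ]]
  have hW1pos : ∀ x ∈ Ioo ζ (ζ + δ/2), 0 < deriv W x := by
    intro x hx
    have := hmono (left_mem_Icc.2 (by linarith [hδ])) ⟨hx.1.le, hx.2.le⟩ hx.1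
    rwa [hW'] at this
  have hmem : Ioo ζ (ζ + δ/2) ∈ 𝓝[>] ζ :=
    Ioo_mem_nhdsGT_of_mem ⟨le_rfl, by linarith⟩
  have hg' : ∀ᶠ x in 𝓝[>] ζ, deriv W x ≠ 0 :=
    eventually_of_mem hmem fun x hx => (hW1pos x hx).ne'
  have hff' : ∀ᶠ x in 𝓝[>] ζ,
      HasDerivAt (fun y => (deriv W y) ^ 2) (2 * deriv W x * deriv (deriv W) x) x := by
    filter_upwards with x
    have h := ((hW1d x).hasDerivAt).pow 2
    simpa [Pi.pow_def, mul_comm, mul_assoc, mul_left_comm] using h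
  have hgg' : ∀ᶠ x in 𝓝[>] ζ, HasDerivAt W (deriv W x) x := by
    filter_upwards with x; exact (hWd x).hasDerivAt
  have hfa : Tendsto (fun x => (deriv W x) ^ 2) (𝓝[>] ζ) (𝓝 0) := by
    have := ((hW1d.continuous.tendsto ζ).mono_left
      (nhdsWithin_le_nhds (s := Ioi ζ))).pow 2
    simpa [hW'] using this
  have hga : Tendsto W (𝓝[>] ζ) (𝓝 0) := by
    have := (hWd.continuous.tendsto ζ).mono_left (nhdsWithin_le_nhds (s := Ioi ζ))
    simpa [hW0] using this
  have hdiv : Tendsto (fun x => (2 * deriv W x * deriv (deriv W) x) / deriv W x)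
      (𝓝[>] ζ) (𝓝 (2 * deriv (deriv W) ζ)) := by
    have h1 : Tendsto (fun x => 2 * deriv (deriv W) x) (𝓝[>] ζ)
        (𝓝 (2 * deriv (deriv W) ζ)) :=
      ((hW2c.tendsto ζ).const_mul 2).mono_left nhdsWithin_le_nhds
    refine h1.congr' ?_
    filter_upwards [hg'] with x hx
    field_simp
  exact HasDerivAt.lhopital_zero_nhdsGT hff' hgg' hg' hfa hga hdiv

/-- Left limit at a zero: `(W')²/W → 2 W''`. -/
private lemma lim_left {W : ℝ → ℝ} {ζ : ℝ} (hW3 : ContDiff ℝ 3 W)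
    (hW0 : W ζ = 0) (hW' : deriv W ζ = 0)
    (hW'' : 0 < deriv (deriv W) ζ) :
    Tendsto (fun φ => (deriv W φ) ^ 2 / W φ) (𝓝[<] ζ)
      (𝓝 (2 * deriv (deriv W) ζ)) := by
  obtain ⟨hWd, hW1d, hW2c⟩ := W_smooth_facts hW3
  have hpos : ∀ᶠ x in 𝓝 ζ, 0 < deriv (deriv W) x :=
    hW2c.continuousAt.eventually (eventually_gt_nhds hW'')
  obtain ⟨δ, hδ, hball⟩ := Metric.eventually_nhds_iff_ball.1 hpos
  have hmono : StrictMonoOn (deriv W) (Icc (ζ - δ/2) ζ) := by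
    apply strictMonoOn_of_deriv_pos (convex_Icc _ _) (hW1d.continuous.continuousOn)
    intro x hx
    rw [interior_Icc] at hx
    apply hball
    rw [Real.ball_eq_Ioo]
    constructor <;> [linarith [hx.1, hδ]; linarith [hx.2]]
  have hW1neg : ∀ x ∈ Ioo (ζ - δ/2) ζ, deriv W x < 0 := by
    intro x hx
    have := hmono ⟨hx.1.le, hx.2.le⟩ (right_mem_Icc.2 (by linarith [hδ])) hx.2
    rwa [hW'] at this
  have hmem : Ioo (ζ - δ/2) ζ ∈ 𝓝[<] ζ :=
    Ioo_mem_nhdsLT_of_mem ⟨by linarith, le_rfl⟩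
  have hg' : ∀ᶠ x in 𝓝[<] ζ, deriv W x ≠ 0 :=
    eventually_of_mem hmem fun x hx => (hW1neg x hx).ne
  have hff' : ∀ᶠ x in 𝓝[<] ζ,
      HasDerivAt (fun y => (deriv W y) ^ 2) (2 * deriv W x * deriv (deriv W) x) x := by
    filter_upwards with x
    have h := ((hW1d x).hasDerivAt).pow 2
    simpa [Pi.pow_def, mul_comm, mul_assoc, mul_left_comm] using h
  have hgg' : ∀ᶠ x in 𝓝[<] ζ, HasDerivAt W (deriv W x) x := by
    filter_upwards with x; exact (hWd x).hasDerivAt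
  have hfa : Tendsto (fun x => (deriv W x) ^ 2) (𝓝[<] ζ) (𝓝 0) := by
    have := ((hW1d.continuous.tendsto ζ).mono_left
      (nhdsWithin_le_nhds (s := Iio ζ))).pow 2
    simpa [hW'] using this
  have hga : Tendsto W (𝓝[<] ζ) (𝓝 0) := by
    have := (hWd.continuous.tendsto ζ).mono_left (nhdsWithin_le_nhds (s := Iio ζ))
    simpa [hW0] using this
  have hdiv : Tendsto (fun x => (2 * deriv W x * deriv (deriv W) x) / deriv W x)
      (𝓝[<] ζ) (𝓝 (2 * deriv (deriv W) ζ)) := by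
    have h1 : Tendsto (fun x => 2 * deriv (deriv W) x) (𝓝[<] ζ)
        (𝓝 (2 * deriv (deriv W) ζ)) :=
      ((hW2c.tendsto ζ).const_mul 2).mono_left nhdsWithin_le_nhds
    refine h1.congr' ?_
    filter_upwards [hg'] with x hx
    field_simp
  exact HasDerivAt.lhopital_zero_nhdsLT hff' hgg' hg' hfa hga hdiv

theorem V_extends_continuously (W : ℝ → ℝ) (ζm ζp : ℝ)
    (hW3 : ContDiff ℝ 3 W) (hWnn : ∀ φ, 0 ≤ W φ)
    (hlt : ζm < ζp) (hWm : W ζm = 0) (hWp : W ζp = 0)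
    (hW'm : deriv W ζm = 0) (hW'p : deriv W ζp = 0)
    (hW''m : 0 < iteratedDeriv 2 W ζm) (hW''p : 0 < iteratedDeriv 2 W ζp)
    (hWpos : ∀ φ ∈ Ioo ζm ζp, 0 < W φ) :
    ∃ Vbar : ℝ → ℝ, ContinuousOn Vbar (Icc ζm ζp) ∧
      (∀ φ ∈ Ioo ζm ζp, Vbar φ = (deriv W φ) ^ 2 / W φ - iteratedDeriv 2 W φ) ∧
      Vbar ζm = iteratedDeriv 2 W ζm ∧ Vbar ζp = iteratedDeriv 2 W ζp := by
  obtain ⟨hWd, hW1d, hW2c⟩ := W_smooth_facts hW3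
  rw [iter2] at hW''m hW''p
  set V : ℝ → ℝ := fun φ => (deriv W φ) ^ 2 / W φ - deriv (deriv W) φ with hV
  set Vbar : ℝ → ℝ := fun φ => if φ ∈ Ioo ζm ζp then V φ else deriv (deriv W) φ
    with hVbar
  have hVbar_eq : ∀ φ ∈ Ioo ζm ζp, Vbar φ = V φ := fun φ hφ => if_pos hφ
  have hVbm : Vbar ζm = deriv (deriv W) ζm := if_neg (by simp)
  have hVbp : Vbar ζp = deriv (deriv W) ζp := if_neg (by simp [lt_irrefl])
  refine ⟨Vbar, ?_, fun φ hφ => by rw [hVbar_eq φ hφ, iter2], by rw [hVbm, iter2],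
    by rw [hVbp, iter2]⟩
  -- continuity of V on the open interval
  have hVcont : ContinuousOn V (Ioo ζm ζp) := by
    apply ContinuousOn.sub
    · exact ((hW1d.continuous.pow 2).continuousOn).div hWd.continuous.continuousOn
        fun x hx => (hWpos x hx).ne'
    · exact hW2c.continuousOn
  intro x hx
  rcases eq_or_lt_of_le hx.1 with hxm | hxm
  · -- x = ζm
    subst hxm
    have hlim : Tendsto Vbar (𝓝[>] ζm) (𝓝 (deriv (deriv W) ζm)) := by
      have h1 := lim_right hW3 hWm hW'm hW''m
      have h2 : Tendsto V (𝓝[>] ζm) (𝓝 (deriv (deriv W) ζm)) := by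
        have h3 := (hW2c.tendsto ζm).mono_left (nhdsWithin_le_nhds (s := Ioi ζm))
        have := h1.sub h3
        simpa [hV, two_mul] using this
      refine h2.congr' ?_
      filter_upwards [Ioo_mem_nhdsGT_of_mem (Set.mem_Ico.2 ⟨le_rfl, hlt⟩)] with y hy
      exact (hVbar_eq y hy).symm
    rw [ContinuousWithinAt, nhdsWithin_Icc_eq_nhdsGE hlt,
      ← Set.Ioi_insert, nhdsWithin_insert, hVbm]
    exact Tendsto.sup (hVbm ▸ tendsto_pure_nhds Vbar ζm) hlim
  rcases eq_or_lt_of_le hx.2 with hxp | hxp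
  · -- x = ζp
    subst hxp
    have hlim : Tendsto Vbar (𝓝[<] x) (𝓝 (deriv (deriv W) x)) := by
      have h1 := lim_left hW3 hWp hW'p hW''p
      have h2 : Tendsto V (𝓝[<] x) (𝓝 (deriv (deriv W) x)) := by
        have h3 := (hW2c.tendsto x).mono_left (nhdsWithin_le_nhds (s := Iio x))
        have := h1.sub h3
        simpa [hV, two_mul] using this
      refine h2.congr' ?_
      filter_upwards [Ioo_mem_nhdsLT_of_mem (Set.mem_Ioc.2 ⟨hlt, le_rfl⟩)] with y hy
      exact (hVbar_eq y hy).symm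
    rw [ContinuousWithinAt, nhdsWithin_Icc_eq_nhdsLE hlt,
      ← Set.Iio_insert, nhdsWithin_insert, hVbp]
    exact Tendsto.sup (hVbp ▸ tendsto_pure_nhds Vbar x) hlim
  · -- interior
    have hxIoo : x ∈ Ioo ζm ζp := ⟨hxm, hxp⟩
    have : ContinuousAt V x :=
      (hVcont.continuousAt (isOpen_Ioo.mem_nhds hxIoo))
    apply ContinuousWithinAt.congr_of_eventuallyEq
      (this.continuousWithinAt) ?_ (hVbar_eq x hxIoo)
    filter_upwards [nhdsWithin_le_nhds (isOpen_Ioo.mem_nhds hxIoo)] with y hy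
    exact hVbar_eq y hy
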